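/- For all x ≥ 0, J₀(√2·x) − 2·J₀(x) + 1 = (2/π)·∫₀^{π/2} (1 − cos(x·cos t))·(1 − cos(x·sin t)) dt, where J₀ is the Bessel function of the first kind of order 0. -/

import Mathlib

open Real MeasureTheory

/-- Bessel function of the first kind of order 0, via its integral representation. -/
noncomputable def J0 (x : ℝ) : ℝ := (2 / π) * ∫ t in (0:ℝ)..(π/2), Real.cos (x * Real.sin t)

section aux

variable (c : ℝ)

private lemma g_cont (c : ℝ) : Continuous (fun t : ℝ => Real.cos (c * Real.sin t)) := by
  continuity

private lemma int_cos_eq (x : ℝ) :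
    ∫ t in (0:ℝ)..(π/2), Real.cos (x * Real.cos t)
      = ∫ t in (0:ℝ)..(π/2), Real.cos (x * Real.sin t) := by
  have h := intervalIntegral.integral_comp_sub_left (a := (0:ℝ)) (b := π/2)
      (fun t => Real.cos (x * Real.sin t)) (π/2)
  simp only [Real.sin_pi_div_two_sub] at h
  simpa using h

private lemma sin_add_pi_div_four (t : ℝ) :
    Real.sqrt 2 * Real.sin (t + π/4) = Real.sin t + Real.cos t := by
  rw [Real.sin_add, Real.sin_pi_div_four, Real.cos_pi_div_four]
  have h2 : Real.sqrt 2 * Real.sqrt 2 = 2 := Real.mul_self_sqrt (by norm_num)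
  linear_combination ((Real.sin t + Real.cos t)/2) * h2

private lemma sin_pi_div_four_sub (t : ℝ) :
    Real.sqrt 2 * Real.sin (π/4 - t) = Real.cos t - Real.sin t := by
  rw [Real.sin_sub, Real.sin_pi_div_four, Real.cos_pi_div_four]
  have h2 : Real.sqrt 2 * Real.sqrt 2 = 2 := Real.mul_self_sqrt (by norm_num)
  linear_combination ((Real.cos t - Real.sin t)/2) * h2

private lemma key_sum (c : ℝ) :
    (∫ t in (0:ℝ)..(π/2), Real.cos (c * Real.sin (t + π/4)))
      + (∫ t in (0:ℝ)..(π/2), Real.cos (c * Real.sin (π/4 - t)))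
      = 2 * ∫ t in (0:ℝ)..(π/2), Real.cos (c * Real.sin t) := by
  set g : ℝ → ℝ := fun t => Real.cos (c * Real.sin t) with hg
  have hgc : Continuous g := g_cont c
  have h1 : (∫ t in (0:ℝ)..(π/2), g (t + π/4)) = ∫ t in (π/4:ℝ)..(3*π/4), g t := by
    have := intervalIntegral.integral_comp_add_right (a := (0:ℝ)) (b := π/2) g (π/4)
    rw [this]; norm_num; ring_nf
  have h2 : (∫ t in (0:ℝ)..(π/2), g (π/4 - t)) = ∫ t in (-(π/4):ℝ)..(π/4), g t := by
    have := intervalIntegral.integral_comp_sub_left (a := (0:ℝ)) (b := π/2) g (π/4)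
    rw [this]; norm_num; ring_nf
  have hneg : (∫ t in (-(π/4):ℝ)..(0:ℝ), g t) = ∫ t in (0:ℝ)..(π/4), g t := by
    have := intervalIntegral.integral_comp_neg (a := (0:ℝ)) (b := π/4) g
    have hge : ∀ t, g (-t) = g t := fun t => by simp [hg]
    simp only [hge] at this
    rw [this]; simp
  have hrefl : (∫ t in (π/2:ℝ)..(3*π/4), g t) = ∫ t in (π/4:ℝ)..(π/2), g t := by
    have := intervalIntegral.integral_comp_sub_left (a := (π/4:ℝ)) (b := π/2) g π
    have hgp : ∀ t, g (π - t) = g t := fun t => by simp [hg, Real.sin_pi_sub]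
    simp only [hgp] at this
    have e1 : π - π/2 = π/2 := by ring
    have e2 : π - π/4 = 3*π/4 := by ring
    rw [e1, e2] at this
    exact this.symm
  have hi : ∀ a b : ℝ, IntervalIntegrable g volume a b := fun a b => hgc.intervalIntegrable a b
  have split1 : (∫ t in (-(π/4):ℝ)..(π/4), g t)
      = (∫ t in (-(π/4):ℝ)..(0:ℝ), g t) + ∫ t in (0:ℝ)..(π/4), g t :=
    (intervalIntegral.integral_add_adjacent_intervals (hi _ _) (hi _ _)).symm
  have split2 : (∫ t in (π/4:ℝ)..(3*π/4), g t)
      = (∫ t in (π/4:ℝ)..(π/2), g t) + ∫ t in (π/2:ℝ)..(3*π/4), g t :=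
    (intervalIntegral.integral_add_adjacent_intervals (hi _ _) (hi _ _)).symm
  have whole : (∫ t in (0:ℝ)..(π/4), g t) + (∫ t in (π/4:ℝ)..(π/2), g t)
      = ∫ t in (0:ℝ)..(π/2), g t :=
    intervalIntegral.integral_add_adjacent_intervals (hi _ _) (hi _ _)
  rw [h1, h2, split1, split2, hneg, hrefl]
  linarith [whole]

end aux

theorem bessel_combination_integral_repr (x : ℝ) (hx : 0 ≤ x) :
    J0 (Real.sqrt 2 * x) - 2 * J0 x + 1 =
      (2 / π) * ∫ t in (0:ℝ)..(π/2),
        (1 - Real.cos (x * Real.cos t)) * (1 - Real.cos (x * Real.sin t)) := by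
  set c := Real.sqrt 2 * x with hc
  -- pointwise identity for the integrand
  have hpt : ∀ t : ℝ,
      (1 - Real.cos (x * Real.cos t)) * (1 - Real.cos (x * Real.sin t))
        = 1 - Real.cos (x * Real.cos t) - Real.cos (x * Real.sin t)
          + (1/2) * Real.cos (c * Real.sin (t + π/4))
          + (1/2) * Real.cos (c * Real.sin (π/4 - t)) := by
    intro t
    have ha : c * Real.sin (t + π/4) = x * Real.cos t + x * Real.sin t := by
      rw [hc, mul_assoc, mul_comm x, ← mul_assoc, sin_add_pi_div_four]; ring
    have hb : c * Real.sin (π/4 - t) = x * Real.cos t - x * Real.sin t := by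
      rw [hc, mul_assoc, mul_comm x, ← mul_assoc, sin_pi_div_four_sub]; ring
    rw [ha, hb, Real.cos_add, Real.cos_sub]
    ring
  have hπ : (0:ℝ) < π := Real.pi_pos
  -- split the integral
  have hi1 : IntervalIntegrable (fun t => Real.cos (x * Real.cos t)) volume 0 (π/2) :=
    (by continuity : Continuous fun t : ℝ => Real.cos (x * Real.cos t)).intervalIntegrable _ _
  have hi2 : IntervalIntegrable (fun t => Real.cos (x * Real.sin t)) volume 0 (π/2) :=
    (g_cont x).intervalIntegrable _ _
  have hi3 : IntervalIntegrable (fun t => (1/2) * Real.cos (c * Real.sin (t + π/4))) volume 0 (π/2) :=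
    (by fun_prop : Continuous fun t : ℝ => (1/2) * Real.cos (c * Real.sin (t + π/4))).intervalIntegrable _ _
  have hi4 : IntervalIntegrable (fun t => (1/2) * Real.cos (c * Real.sin (π/4 - t))) volume 0 (π/2) :=
    (by fun_prop : Continuous fun t : ℝ => (1/2) * Real.cos (c * Real.sin (π/4 - t))).intervalIntegrable _ _
  have hione : IntervalIntegrable (fun _ : ℝ => (1:ℝ)) volume 0 (π/2) :=
    intervalIntegrable_const
  have hsplit : (∫ t in (0:ℝ)..(π/2),
      (1 - Real.cos (x * Real.cos t)) * (1 - Real.cos (x * Real.sin t)))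
      = (π/2) - (∫ t in (0:ℝ)..(π/2), Real.cos (x * Real.cos t))
        - (∫ t in (0:ℝ)..(π/2), Real.cos (x * Real.sin t))
        + (1/2) * (∫ t in (0:ℝ)..(π/2), Real.cos (c * Real.sin (t + π/4)))
        + (1/2) * (∫ t in (0:ℝ)..(π/2), Real.cos (c * Real.sin (π/4 - t))) := by
    rw [intervalIntegral.integral_congr (g := fun t =>
        1 - Real.cos (x * Real.cos t) - Real.cos (x * Real.sin t)
          + (1/2) * Real.cos (c * Real.sin (t + π/4))
          + (1/2) * Real.cos (c * Real.sin (π/4 - t))) (fun t _ => hpt t)]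
    rw [intervalIntegral.integral_add (((hione.sub hi1).sub hi2).add hi3) hi4,
        intervalIntegral.integral_add ((hione.sub hi1).sub hi2) hi3,
        intervalIntegral.integral_sub (hione.sub hi1) hi2,
        intervalIntegral.integral_sub hione hi1]
    simp [intervalIntegral.integral_const, intervalIntegral.integral_const_mul]
  rw [hsplit, int_cos_eq x]
  have hk := key_sum c
  have hJ0c : J0 c = (2/π) * ∫ t in (0:ℝ)..(π/2), Real.cos (c * Real.sin t) := rfl
  have hJ0x : J0 x = (2/π) * ∫ t in (0:ℝ)..(π/2), Real.cos (x * Real.sin t) := rfl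
  rw [hJ0c, hJ0x]
  set A := ∫ t in (0:ℝ)..(π/2), Real.cos (c * Real.sin (t + π/4)) with hA
  set B := ∫ t in (0:ℝ)..(π/2), Real.cos (c * Real.sin (π/4 - t)) with hB
  set S := ∫ t in (0:ℝ)..(π/2), Real.cos (x * Real.sin t) with hS
  set S2 := ∫ t in (0:ℝ)..(π/2), Real.cos (c * Real.sin t) with hS2
  field_simp
  linear_combination (-1) * hk
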